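/- For every overlapping IFS with critical itineraries α and β, there exists a ∈ (0,1) such that π_a(α) = π_a(β), i.e. the power series equation ∑_{n≥0} α_n a^n = ∑_{n≥0} β_n a^n has a solution in (0,1). -/

import Mathlib

open Set Filter Topology

/-- Strict lexicographic order on binary strings. -/
def lexLt (σ ω : ℕ → Bool) : Prop :=
  ∃ k, (∀ j < k, σ j = ω j) ∧ σ k < ω k

/-- Lexicographic order on binary strings. -/
def lexLe (σ ω : ℕ → Bool) : Prop := lexLt σ ω ∨ σ = ω

/-- n-fold shift. -/
def shiftn (n : ℕ) (ω : ℕ → Bool) : ℕ → Bool := fun k => ω (k + n)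

/-- Plus dynamical system: boundary point goes to the 0-branch inverse `g1` side, i.e. `x ≥ q` uses `g1`. -/
noncomputable def Tplus (g0 g1 : ℝ → ℝ) (q : ℝ) (x : ℝ) : ℝ := if x < q then g0 x else g1 x

noncomputable def Tminus (g0 g1 : ℝ → ℝ) (q : ℝ) (x : ℝ) : ℝ := if x ≤ q then g0 x else g1 x

/-- Itinerary under the plus system. -/
noncomputable def tauPlus (g0 g1 : ℝ → ℝ) (q : ℝ) (x : ℝ) : ℕ → Bool :=
  fun n => decide (q ≤ (Tplus g0 g1 q)^[n] x)

/-- Itinerary under the minus system. -/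
noncomputable def tauMinus (g0 g1 : ℝ → ℝ) (q : ℝ) (x : ℝ) : ℕ → Bool :=
  fun n => decide (q < (Tminus g0 g1 q)^[n] x)

/-- Coding map of the uniform IFS with ratio `a`. -/
noncomputable def piU (a : ℝ) (ω : ℕ → Bool) : ℝ := (1 - a) * ∑' k : ℕ, (cond (ω k) (a ^ k) 0)

/-- `wordMap u0 u1 σ k = f_{σ|k} = f_{σ 0} ∘ ⋯ ∘ f_{σ k}`. -/
def wordMap (u0 u1 : ℝ → ℝ) (σ : ℕ → Bool) : ℕ → ℝ → ℝ
  | 0 => cond (σ 0) u1 u0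
  | (k+1) => fun x => wordMap u0 u1 σ k ((cond (σ (k+1)) u1 u0) x)

/-- Coding map of the IFS `(u0, u1)`. -/
noncomputable def piCode (u0 u1 : ℝ → ℝ) (σ : ℕ → Bool) : ℝ :=
  limUnder atTop (fun k => wordMap u0 u1 σ k 0)

/-- `h` is a homeomorphism of `[0,1]` onto itself. -/
def IsIccHomeo (h : ℝ → ℝ) : Prop :=
  ∃ h' : ℝ → ℝ, ContinuousOn h (Icc 0 1) ∧ ContinuousOn h' (Icc 0 1) ∧
    MapsTo h (Icc 0 1) (Icc 0 1) ∧ MapsTo h' (Icc 0 1) (Icc 0 1) ∧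
    (∀ x ∈ Icc (0:ℝ) 1, h' (h x) = x) ∧ (∀ y ∈ Icc (0:ℝ) 1, h (h' y) = y)

namespace Stmt16


noncomputable def dig (a : ℝ) (ω : ℕ → Bool) (k : ℕ) : ℝ := cond (ω k) (a ^ k) 0

lemma dig_nonneg {a : ℝ} (ha : 0 ≤ a) (ω : ℕ → Bool) (k : ℕ) : 0 ≤ dig a ω k := by
  cases h : ω k <;> simp [dig, h, pow_nonneg ha]

lemma dig_le {a : ℝ} (ha : 0 ≤ a) (ω : ℕ → Bool) (k : ℕ) : dig a ω k ≤ a ^ k := by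
  cases h : ω k <;> simp [dig, h, pow_nonneg ha]

lemma summable_dig {a : ℝ} (ha : 0 ≤ a) (ha1 : a < 1) (ω : ℕ → Bool) : Summable (dig a ω) :=
  Summable.of_nonneg_of_le (dig_nonneg ha ω) (dig_le ha ω) (summable_geometric_of_lt_one ha ha1)

lemma piU_eq (a : ℝ) (ω : ℕ → Bool) : piU a ω = (1 - a) * ∑' k, dig a ω k := rfl

lemma piU_nonneg {a : ℝ} (ha : 0 ≤ a) (ha1 : a < 1) (ω : ℕ → Bool) : 0 ≤ piU a ω :=
  mul_nonneg (by linarith) (tsum_nonneg (fun k => dig_nonneg ha ω k))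

lemma piU_le_one {a : ℝ} (ha : 0 ≤ a) (ha1 : a < 1) (ω : ℕ → Bool) : piU a ω ≤ 1 := by
  have h1 : ∑' k, dig a ω k ≤ ∑' k : ℕ, a ^ k :=
    Summable.tsum_le_tsum (dig_le ha ω) (summable_dig ha ha1 ω) (summable_geometric_of_lt_one ha ha1)
  rw [tsum_geometric_of_lt_one ha ha1] at h1
  have h2 : (0:ℝ) < 1 - a := by linarith
  calc piU a ω ≤ (1-a) * (1-a)⁻¹ := mul_le_mul_of_nonneg_left h1 (le_of_lt h2)
    _ = 1 := mul_inv_cancel₀ (ne_of_gt h2)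

lemma piU_ge_first {a : ℝ} (ha : 0 ≤ a) (ha1 : a < 1) {ω : ℕ → Bool} (h0 : ω 0 = true) :
    1 - a ≤ piU a ω := by
  have h1 : dig a ω 0 ≤ ∑' k, dig a ω k :=
    Summable.le_tsum (summable_dig ha ha1 ω) 0 (fun j _ => dig_nonneg ha ω j)
  have h2 : dig a ω 0 = 1 := by simp [dig, h0]
  rw [h2] at h1
  have : (1-a) * 1 ≤ (1-a) * ∑' k, dig a ω k := mul_le_mul_of_nonneg_left h1 (by linarith)
  simpa [piU_eq] using this

lemma piU_le_of_first {a : ℝ} (ha : 0 ≤ a) (ha1 : a < 1) {ω : ℕ → Bool} (h0 : ω 0 = false) :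
    piU a ω ≤ a := by
  have hg := summable_geometric_of_lt_one ha ha1
  have hs : Summable (fun k : ℕ => a ^ (k+1)) := by
    simpa [pow_succ, mul_comm] using hg.mul_left a
  have hle : ∀ k, dig a ω k ≤ (fun k : ℕ => if k = 0 then 0 else a ^ k) k := by
    intro k
    cases k with
    | zero => simp [dig, h0]
    | succ k => simpa using dig_le ha ω (k+1)
  have hsum2 : Summable (fun k : ℕ => if k = 0 then (0:ℝ) else a ^ k) := by
    apply Summable.of_nonneg_of_le (fun k => by positivity) (fun k => ?_) hg
    by_cases h : k = 0 <;> simp [h, pow_nonneg ha]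
  have h1 : ∑' k, dig a ω k ≤ ∑' k : ℕ, (if k = 0 then 0 else a ^ k) :=
    Summable.tsum_le_tsum hle (summable_dig ha ha1 ω) hsum2
  have h2 : ∑' k : ℕ, (if k = 0 then (0:ℝ) else a ^ k) = a * (1-a)⁻¹ := by
    rw [Summable.tsum_eq_zero_add hsum2]
    have : ∀ k : ℕ, (if k + 1 = 0 then (0:ℝ) else a ^ (k+1)) = a * a ^ k := by
      intro k; simp [pow_succ, mul_comm]
    rw [tsum_congr this, tsum_mul_left, tsum_geometric_of_lt_one ha ha1]
    simp
  rw [h2] at h1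
  have h3 : (0:ℝ) < 1 - a := by linarith
  calc piU a ω ≤ (1-a) * (a * (1-a)⁻¹) := mul_le_mul_of_nonneg_left h1 (le_of_lt h3)
    _ = a := by field_simp

lemma piU_shift {a : ℝ} (ha : 0 ≤ a) (ha1 : a < 1) (ω : ℕ → Bool) (n : ℕ) :
    piU a ω = (1 - a) * (∑ i ∈ Finset.range n, dig a ω i) + a ^ n * piU a (shiftn n ω) := by
  have hs := summable_dig ha ha1 ω
  have h1 : (∑ i ∈ Finset.range n, dig a ω i) + ∑' i, dig a ω (i + n) = ∑' i, dig a ω i :=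
    Summable.sum_add_tsum_nat_add n hs
  have h2 : ∀ i, dig a ω (i + n) = a ^ n * dig a (shiftn n ω) i := by
    intro i
    have : (shiftn n ω) i = ω (i + n) := rfl
    cases h : ω (i + n) <;> simp [dig, this, h, pow_add] <;> ring
  have h3 : ∑' i, dig a ω (i + n) = a ^ n * ∑' i, dig a (shiftn n ω) i := by
    rw [tsum_congr h2, tsum_mul_left]
  rw [piU_eq, piU_eq, ← h1, h3]; ring

lemma piU_sub_of_prefix {a : ℝ} (ha : 0 ≤ a) (ha1 : a < 1) {ω ω' : ℕ → Bool} {n : ℕ}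
    (hpre : ∀ j < n, ω j = ω' j) :
    piU a ω' - piU a ω = a ^ n * (piU a (shiftn n ω') - piU a (shiftn n ω)) := by
  rw [piU_shift ha ha1 ω n, piU_shift ha ha1 ω' n]
  have h : (∑ i ∈ Finset.range n, dig a ω i) = ∑ i ∈ Finset.range n, dig a ω' i :=
    Finset.sum_congr rfl (fun i hi => by
      simp only [dig]; rw [hpre i (Finset.mem_range.mp hi)])
  rw [h]; ring



lemma abs_pow_sub_pow {r : ℝ} (hr : 0 ≤ r) {a b : ℝ} (ha : 0 ≤ a) (har : a ≤ r)
    (hb : 0 ≤ b) (hbr : b ≤ r) :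
    ∀ k : ℕ, |a ^ k - b ^ k| ≤ (k : ℝ) * r ^ (k - 1) * |a - b| := by
  intro k; induction k with
  | zero => simp
  | succ k ih =>
    have h1 : a ^ (k+1) - b ^ (k+1) = a * (a ^ k - b ^ k) + (a - b) * b ^ k := by ring
    have step1 : |a ^ (k+1) - b ^ (k+1)| ≤ a * |a ^ k - b ^ k| + |a - b| * b ^ k := by
      rw [h1]
      refine le_trans (abs_add_le _ _) ?_
      rw [abs_mul, abs_mul, abs_of_nonneg ha, abs_of_nonneg (pow_nonneg hb k)]
    have step2 : a * |a ^ k - b ^ k| + |a - b| * b ^ k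
        ≤ r * ((k : ℝ) * r ^ (k-1) * |a - b|) + |a - b| * r ^ k := by
      have t1 : a * |a ^ k - b ^ k| ≤ r * ((k : ℝ) * r ^ (k-1) * |a - b|) := by
        have : a * |a ^ k - b ^ k| ≤ r * |a ^ k - b ^ k| :=
          mul_le_mul_of_nonneg_right har (abs_nonneg _)
        exact le_trans this (mul_le_mul_of_nonneg_left ih hr)
      have t2 : |a - b| * b ^ k ≤ |a - b| * r ^ k :=
        mul_le_mul_of_nonneg_left (pow_le_pow_left₀ hb hbr k) (abs_nonneg _)
      exact add_le_add t1 t2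
    have step3 : r * ((k : ℝ) * r ^ (k-1) * |a - b|) + |a - b| * r ^ k
        ≤ ((k:ℝ) + 1) * r ^ k * |a - b| := by
      have hrr : r * ((k : ℝ) * r ^ (k-1) * |a - b|) ≤ (k:ℝ) * r ^ k * |a - b| := by
        cases k with
        | zero => simp
        | succ k =>
          rw [Nat.succ_sub_one]
          have e : r * (((k:ℕ)+1 : ℝ) * r ^ k * |a - b|) = ((k:ℕ)+1 : ℝ) * (r * r ^ k) * |a - b| := by
            ring
          push_cast
          push_cast at e
          rw [e, ← pow_succ']
      calc r * ((k : ℝ) * r ^ (k-1) * |a - b|) + |a - b| * r ^ k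
          ≤ (k:ℝ) * r ^ k * |a - b| + |a - b| * r ^ k := add_le_add hrr le_rfl
        _ = ((k:ℝ) + 1) * r ^ k * |a - b| := by ring
    have : ((k:ℕ)+1 : ℝ) = ((k:ℝ)+1) := by push_cast; ring
    calc |a ^ (k+1) - b ^ (k+1)| ≤ r * ((k : ℝ) * r ^ (k-1) * |a - b|) + |a - b| * r ^ k :=
          le_trans step1 step2
      _ ≤ ((k:ℝ) + 1) * r ^ k * |a - b| := step3
      _ = ((k+1 : ℕ) : ℝ) * r ^ ((k+1) - 1) * |a - b| := by push_cast; ring_nf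

lemma piU_lipschitz {r : ℝ} (hr0 : 0 < r) (hr1 : r < 1) :
    ∃ L : ℝ, 0 ≤ L ∧ ∀ (ω : ℕ → Bool) (a b : ℝ), 0 ≤ a → a ≤ r → 0 ≤ b → b ≤ r →
      |piU a ω - piU b ω| ≤ L * |a - b| := by
  classical
  set u : ℕ → ℝ := fun k => (1/r + 1) * (((k:ℝ)+1) * r ^ k) with hu
  have hsum_kr : Summable (fun k : ℕ => (k:ℝ) * r ^ k) := by
    have := summable_pow_mul_geometric_of_norm_lt_one (R := ℝ) 1
      (r := r) (by rw [Real.norm_eq_abs, abs_of_nonneg (le_of_lt hr0)]; exact hr1)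
    simpa using this
  have hsum_u : Summable u := by
    apply Summable.mul_left
    have : (fun k : ℕ => ((k:ℝ)+1) * r ^ k) = fun k : ℕ => (k:ℝ) * r ^ k + r ^ k := by
      funext k; ring
    rw [this]
    exact hsum_kr.add (summable_geometric_of_lt_one (le_of_lt hr0) hr1)
  have hu_nonneg : ∀ k, 0 ≤ u k := by
    intro k
    apply mul_nonneg
    · positivity
    · positivity
  refine ⟨∑' k, u k, tsum_nonneg hu_nonneg, ?_⟩
  intro ω a b ha har hb hbr
  have ha1 : a < 1 := lt_of_le_of_lt har hr1
  have hb1 : b < 1 := lt_of_le_of_lt hbr hr1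
  -- pointwise bound
  set P : ℝ → ℕ → ℝ := fun t k => (1 - t) * (cond (ω k) (t ^ k) 0) with hP
  have hsummableP : ∀ t : ℝ, 0 ≤ t → t < 1 → Summable (P t) := by
    intro t h0 h1
    apply Summable.mul_left
    apply Summable.of_nonneg_of_le (fun k => ?_) (fun k => ?_)
      (summable_geometric_of_lt_one h0 h1)
    · cases h : ω k <;> simp [h, pow_nonneg h0]
    · cases h : ω k <;> simp [h, pow_nonneg h0]
  have hpiU : ∀ t : ℝ, 0 ≤ t → t < 1 → piU t ω = ∑' k, P t k := by
    intro t h0 h1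
    rw [piU, ← tsum_mul_left]
  have hptw : ∀ k, |P a k - P b k| ≤ u k * |a - b| := by
    intro k
    have hbound : |((1-a) * a ^ k) - ((1-b) * b ^ k)| ≤ u k * |a - b| := by
      have e1 : (1-a) * a ^ k - (1-b) * b ^ k = (a ^ k - b ^ k) - (a ^ (k+1) - b ^ (k+1)) := by
        ring
      have i1 := abs_pow_sub_pow (le_of_lt hr0) ha har hb hbr k
      have i2 := abs_pow_sub_pow (le_of_lt hr0) ha har hb hbr (k+1)
      have i3 : |(1-a) * a ^ k - (1-b) * b ^ k| ≤
          (k:ℝ) * r ^ (k-1) * |a-b| + ((k+1:ℕ):ℝ) * r ^ k * |a - b| := by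
        rw [e1]
        refine le_trans (abs_sub _ _) ?_
        have : (k+1) - 1 = k := rfl
        rw [this] at i2
        exact add_le_add i1 i2
      refine le_trans i3 ?_
      have hkr : (k:ℝ) * r ^ (k-1) ≤ (1/r) * (((k:ℝ)+1) * r ^ k) := by
        cases k with
        | zero => simp; positivity
        | succ k =>
          rw [Nat.succ_sub_one]
          rw [div_mul_eq_mul_div, le_div_iff₀ hr0]
          push_cast
          have : ((k:ℝ)+1) * r ^ k * r = ((k:ℝ)+1) * r ^ (k+1) := by rw [pow_succ]; ring
          nlinarith [pow_nonneg (le_of_lt hr0) k, pow_nonneg (le_of_lt hr0) (k+1),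
            mul_le_mul_of_nonneg_right (le_of_lt hr0) (pow_nonneg (le_of_lt hr0) k)]
      have expand : u k * |a-b| = (1/r) * (((k:ℝ)+1) * r ^ k) * |a-b| + (((k:ℝ)+1) * r ^ k) * |a-b| := by
        rw [hu]; ring
      rw [expand]
      push_cast
      have h2 : ((k:ℝ)+1) * r ^ k * |a-b| ≤ ((k:ℝ)+1) * r ^ k * |a-b| := le_rfl
      apply add_le_add _ h2
      exact mul_le_mul_of_nonneg_right hkr (abs_nonneg _)
    cases h : ω k
    · simp [hP, h]
      positivity
    · simpa [hP, h] using hbound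
  have hsubsum : Summable (fun k => P a k - P b k) := (hsummableP a ha ha1).sub (hsummableP b hb hb1)
  have h1 : piU a ω - piU b ω = ∑' k, (P a k - P b k) := by
    rw [hpiU a ha ha1, hpiU b hb hb1, Summable.tsum_sub (hsummableP a ha ha1) (hsummableP b hb hb1)]
  rw [h1]
  have h2 : |∑' k, (P a k - P b k)| ≤ ∑' k, |P a k - P b k| := by
    have hsabs : Summable (fun k => |P a k - P b k|) := hsubsum.abs
    simpa [Real.norm_eq_abs] using norm_tsum_le_tsum_norm (f := fun k => P a k - P b k) (by simpa [Real.norm_eq_abs] using hsabs)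
  refine le_trans h2 ?_
  have h3 : ∑' k, |P a k - P b k| ≤ ∑' k, u k * |a - b| :=
    Summable.tsum_le_tsum hptw hsubsum.abs (hsum_u.mul_right _)
  rw [tsum_mul_right] at h3
  exact h3



structure Hyp (f0 f1 g0 g1 : ℝ → ℝ) (q c : ℝ) : Prop where
  f0m : StrictMonoOn f0 (Icc 0 1)
  f1m : StrictMonoOn f1 (Icc 0 1)
  f0c : ContinuousOn f0 (Icc 0 1)
  f1c : ContinuousOn f1 (Icc 0 1)
  lip0 : ∀ x ∈ Icc (0:ℝ) 1, ∀ y ∈ Icc (0:ℝ) 1, |f0 x - f0 y| ≤ c * |x - y|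
  lip1 : ∀ x ∈ Icc (0:ℝ) 1, ∀ y ∈ Icc (0:ℝ) 1, |f1 x - f1 y| ≤ c * |x - y|
  hc0 : 1/2 ≤ c
  hc1 : c < 1
  h00 : f0 0 = 0
  h11 : f1 1 = 1
  h10 : 0 < f1 0
  h01 : f0 1 < 1
  hq1 : f1 0 < q
  hq2 : q < f0 1
  hg0 : ∀ x ∈ Icc (0:ℝ) 1, g0 (f0 x) = x
  hg1 : ∀ x ∈ Icc (0:ℝ) 1, g1 (f1 x) = x

namespace Hyp

variable {f0 f1 g0 g1 : ℝ → ℝ} {q c : ℝ} (H : Hyp f0 f1 g0 g1 q c)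
include H

lemma hq01 : q ∈ Icc (0:ℝ) 1 :=
  ⟨le_of_lt (lt_trans H.h10 H.hq1), le_of_lt (lt_trans H.hq2 H.h01)⟩

lemma hcpos : 0 < c := lt_of_lt_of_le (by norm_num) H.hc0

lemma g0_spec : ∀ y ∈ Icc 0 (f0 1), g0 y ∈ Icc (0:ℝ) 1 ∧ f0 (g0 y) = y := by
  intro y hy
  have h1 : y ∈ Icc (f0 0) (f0 1) := by rwa [H.h00]
  obtain ⟨x, hx, hfx⟩ := intermediate_value_Icc (by norm_num) H.f0c h1
  have : g0 y = x := by rw [← hfx]; exact H.hg0 x hx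
  rw [this, ← hfx]
  exact ⟨hx, rfl⟩

lemma g1_spec : ∀ y ∈ Icc (f1 0) 1, g1 y ∈ Icc (0:ℝ) 1 ∧ f1 (g1 y) = y := by
  intro y hy
  have h1 : y ∈ Icc (f1 0) (f1 1) := by rwa [H.h11]
  obtain ⟨x, hx, hfx⟩ := intermediate_value_Icc (by norm_num) H.f1c h1
  have : g1 y = x := by rw [← hfx]; exact H.hg1 x hx
  rw [this, ← hfx]
  exact ⟨hx, rfl⟩

lemma g0_lt {u v : ℝ} (hu : u ∈ Icc 0 (f0 1)) (hv : v ∈ Icc 0 (f0 1)) (huv : u < v) :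
    g0 u < g0 v := by
  obtain ⟨hu1, hu2⟩ := H.g0_spec u hu
  obtain ⟨hv1, hv2⟩ := H.g0_spec v hv
  rcases lt_trichotomy (g0 u) (g0 v) with h | h | h
  · exact h
  · exfalso; rw [← hu2, ← hv2, h] at huv; exact lt_irrefl _ huv
  · exfalso
    have := H.f0m hv1 hu1 h
    rw [hu2, hv2] at this
    exact absurd (lt_trans huv this) (lt_irrefl _)

lemma g0_le {u v : ℝ} (hu : u ∈ Icc 0 (f0 1)) (hv : v ∈ Icc 0 (f0 1)) (huv : u ≤ v) :
    g0 u ≤ g0 v := by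
  rcases eq_or_lt_of_le huv with h | h
  · rw [h]
  · exact le_of_lt (H.g0_lt hu hv h)

lemma g1_lt {u v : ℝ} (hu : u ∈ Icc (f1 0) 1) (hv : v ∈ Icc (f1 0) 1) (huv : u < v) :
    g1 u < g1 v := by
  obtain ⟨hu1, hu2⟩ := H.g1_spec u hu
  obtain ⟨hv1, hv2⟩ := H.g1_spec v hv
  rcases lt_trichotomy (g1 u) (g1 v) with h | h | h
  · exact h
  · exfalso; rw [← hu2, ← hv2, h] at huv; exact lt_irrefl _ huv
  · exfalso
    have := H.f1m hv1 hu1 h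
    rw [hu2, hv2] at this
    exact absurd (lt_trans huv this) (lt_irrefl _)

lemma g1_le {u v : ℝ} (hu : u ∈ Icc (f1 0) 1) (hv : v ∈ Icc (f1 0) 1) (huv : u ≤ v) :
    g1 u ≤ g1 v := by
  rcases eq_or_lt_of_le huv with h | h
  · rw [h]
  · exact le_of_lt (H.g1_lt hu hv h)

lemma g0_exp {u v : ℝ} (hu : u ∈ Icc 0 (f0 1)) (hv : v ∈ Icc 0 (f0 1)) (huv : u ≤ v) :
    v - u ≤ c * (g0 v - g0 u) := by
  obtain ⟨hu1, hu2⟩ := H.g0_spec u hu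
  obtain ⟨hv1, hv2⟩ := H.g0_spec v hv
  have h := H.lip0 (g0 v) hv1 (g0 u) hu1
  rw [hv2, hu2] at h
  have h2 : g0 u ≤ g0 v := H.g0_le hu hv huv
  rw [abs_of_nonneg (by linarith), abs_of_nonneg (by linarith)] at h
  exact h

lemma g1_exp {u v : ℝ} (hu : u ∈ Icc (f1 0) 1) (hv : v ∈ Icc (f1 0) 1) (huv : u ≤ v) :
    v - u ≤ c * (g1 v - g1 u) := by
  obtain ⟨hu1, hu2⟩ := H.g1_spec u hu
  obtain ⟨hv1, hv2⟩ := H.g1_spec v hv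
  have h := H.lip1 (g1 v) hv1 (g1 u) hu1
  rw [hv2, hu2] at h
  have h2 : g1 u ≤ g1 v := H.g1_le hu hv huv
  rw [abs_of_nonneg (by linarith), abs_of_nonneg (by linarith)] at h
  exact h

lemma mem_dom0 {x : ℝ} (hx : x ∈ Icc (0:ℝ) 1) (hxq : x ≤ q) : x ∈ Icc 0 (f0 1) :=
  ⟨hx.1, le_of_lt (lt_of_le_of_lt hxq H.hq2)⟩

lemma mem_dom1 {x : ℝ} (hx : x ∈ Icc (0:ℝ) 1) (hxq : q ≤ x) : x ∈ Icc (f1 0) 1 :=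
  ⟨le_of_lt (lt_of_lt_of_le H.hq1 hxq), hx.2⟩

omit H in lemma Tm_le {x : ℝ} (h : x ≤ q) : Tminus g0 g1 q x = g0 x := if_pos h
omit H in lemma Tm_gt {x : ℝ} (h : q < x) : Tminus g0 g1 q x = g1 x := if_neg (not_le.mpr h)
omit H in lemma Tp_lt {x : ℝ} (h : x < q) : Tplus g0 g1 q x = g0 x := if_pos h
omit H in lemma Tp_ge {x : ℝ} (h : q ≤ x) : Tplus g0 g1 q x = g1 x := if_neg (not_lt.mpr h)

lemma Tm_mem {x : ℝ} (hx : x ∈ Icc (0:ℝ) 1) : Tminus g0 g1 q x ∈ Icc (0:ℝ) 1 := by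
  by_cases h : x ≤ q
  · rw [Tm_le h]; exact (H.g0_spec x (H.mem_dom0 hx h)).1
  · push_neg at h
    rw [Tm_gt h]; exact (H.g1_spec x (H.mem_dom1 hx (le_of_lt h))).1

lemma Tp_mem {x : ℝ} (hx : x ∈ Icc (0:ℝ) 1) : Tplus g0 g1 q x ∈ Icc (0:ℝ) 1 := by
  by_cases h : x < q
  · rw [Tp_lt h]; exact (H.g0_spec x (H.mem_dom0 hx (le_of_lt h))).1
  · push_neg at h
    rw [Tp_ge h]; exact (H.g1_spec x (H.mem_dom1 hx h)).1

lemma Tm_iter_mem {x : ℝ} (hx : x ∈ Icc (0:ℝ) 1) (n : ℕ) :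
    (Tminus g0 g1 q)^[n] x ∈ Icc (0:ℝ) 1 := by
  induction n with
  | zero => simpa using hx
  | succ n ih => rw [Function.iterate_succ_apply']; exact H.Tm_mem ih

lemma Tp_iter_mem {x : ℝ} (hx : x ∈ Icc (0:ℝ) 1) (n : ℕ) :
    (Tplus g0 g1 q)^[n] x ∈ Icc (0:ℝ) 1 := by
  induction n with
  | zero => simpa using hx
  | succ n ih => rw [Function.iterate_succ_apply']; exact H.Tp_mem ih


omit H in
lemma shift_tauMinus (x : ℝ) (n : ℕ) :
    shiftn n (tauMinus g0 g1 q x) = tauMinus g0 g1 q ((Tminus g0 g1 q)^[n] x) := by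
  funext k
  simp only [shiftn, tauMinus]
  rw [Function.iterate_add_apply]

omit H in
lemma shift_tauPlus (x : ℝ) (n : ℕ) :
    shiftn n (tauPlus g0 g1 q x) = tauPlus g0 g1 q ((Tplus g0 g1 q)^[n] x) := by
  funext k
  simp only [shiftn, tauPlus]
  rw [Function.iterate_add_apply]

lemma orbit_le {x y : ℝ} (hx : x ∈ Icc (0:ℝ) 1) (hy : y ∈ Icc (0:ℝ) 1) (hxy : x ≤ y) :
    ∀ j, (∀ i < j, tauMinus g0 g1 q x i = tauMinus g0 g1 q y i) →
      (Tminus g0 g1 q)^[j] x ≤ (Tminus g0 g1 q)^[j] y := by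
  intro j
  induction j with
  | zero => intro _; simpa using hxy
  | succ j ih =>
    intro hpre
    have hle := ih (fun i hi => hpre i (Nat.lt_succ_of_lt hi))
    have hsym := hpre j (Nat.lt_succ_self j)
    simp only [tauMinus] at hsym
    have hum := H.Tm_iter_mem hx j
    have hvm := H.Tm_iter_mem hy j
    set u := (Tminus g0 g1 q)^[j] x with hu
    set v := (Tminus g0 g1 q)^[j] y with hv
    rw [Function.iterate_succ_apply', Function.iterate_succ_apply']
    by_cases hqu : q < u
    · have hqv : q < v := lt_of_lt_of_le hqu hle
      rw [Tm_gt hqu, Tm_gt hqv]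
      exact H.g1_le (H.mem_dom1 hum (le_of_lt hqu)) (H.mem_dom1 hvm (le_of_lt hqv)) hle
    · push_neg at hqu
      have hdu : decide (q < u) = false := decide_eq_false (not_lt.mpr hqu)
      have hdv : decide (q < v) = false := by rw [← hsym]; exact hdu
      have hqv : v ≤ q := not_lt.mp (of_decide_eq_false hdv)
      rw [Tm_le hqu, Tm_le hqv]
      exact H.g0_le (H.mem_dom0 hum hqu) (H.mem_dom0 hvm hqv) hle

lemma lex_mm {x y : ℝ} (hx : x ∈ Icc (0:ℝ) 1) (hy : y ∈ Icc (0:ℝ) 1) (hxy : x ≤ y) :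
    lexLe (tauMinus g0 g1 q x) (tauMinus g0 g1 q y) := by
  classical
  by_cases hall : ∀ k, tauMinus g0 g1 q x k = tauMinus g0 g1 q y k
  · exact Or.inr (funext hall)
  · push_neg at hall
    left
    set k0 := Nat.find hall with hk0def
    have hk0 : tauMinus g0 g1 q x k0 ≠ tauMinus g0 g1 q y k0 := Nat.find_spec hall
    have hmin : ∀ j < k0, tauMinus g0 g1 q x j = tauMinus g0 g1 q y j :=
      fun j hj => not_not.mp (Nat.find_min hall hj)
    refine ⟨k0, hmin, ?_⟩
    have hle := H.orbit_le hx hy hxy k0 hmin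
    cases hbx : tauMinus g0 g1 q x k0 <;> cases hby : tauMinus g0 g1 q y k0
    · exact absurd (hbx.trans hby.symm) hk0
    · decide
    · exfalso
      simp only [tauMinus] at hbx hby
      have h1 : q < (Tminus g0 g1 q)^[k0] x := of_decide_eq_true hbx
      have h2 : ¬ q < (Tminus g0 g1 q)^[k0] y := of_decide_eq_false hby
      exact h2 (lt_of_lt_of_le h1 hle)
    · exact absurd (hbx.trans hby.symm) hk0

lemma orbit_le_p {x y : ℝ} (hx : x ∈ Icc (0:ℝ) 1) (hy : y ∈ Icc (0:ℝ) 1) (hxy : x ≤ y) :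
    ∀ j, (∀ i < j, tauPlus g0 g1 q x i = tauPlus g0 g1 q y i) →
      (Tplus g0 g1 q)^[j] x ≤ (Tplus g0 g1 q)^[j] y := by
  intro j
  induction j with
  | zero => intro _; simpa using hxy
  | succ j ih =>
    intro hpre
    have hle := ih (fun i hi => hpre i (Nat.lt_succ_of_lt hi))
    have hsym := hpre j (Nat.lt_succ_self j)
    simp only [tauPlus] at hsym
    have hum := H.Tp_iter_mem hx j
    have hvm := H.Tp_iter_mem hy j
    set u := (Tplus g0 g1 q)^[j] x with hu
    set v := (Tplus g0 g1 q)^[j] y with hv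
    rw [Function.iterate_succ_apply', Function.iterate_succ_apply']
    by_cases hqu : q ≤ u
    · have hqv : q ≤ v := le_trans hqu hle
      rw [Tp_ge hqu, Tp_ge hqv]
      exact H.g1_le (H.mem_dom1 hum hqu) (H.mem_dom1 hvm hqv) hle
    · push_neg at hqu
      have hdu : decide (q ≤ u) = false := decide_eq_false (not_le.mpr hqu)
      have hdv : decide (q ≤ v) = false := by rw [← hsym]; exact hdu
      have hqv : v < q := not_le.mp (of_decide_eq_false hdv)
      rw [Tp_lt hqu, Tp_lt hqv]
      exact H.g0_le (H.mem_dom0 hum (le_of_lt hqu)) (H.mem_dom0 hvm (le_of_lt hqv)) hle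

lemma lex_pp {x y : ℝ} (hx : x ∈ Icc (0:ℝ) 1) (hy : y ∈ Icc (0:ℝ) 1) (hxy : x ≤ y) :
    lexLe (tauPlus g0 g1 q x) (tauPlus g0 g1 q y) := by
  classical
  by_cases hall : ∀ k, tauPlus g0 g1 q x k = tauPlus g0 g1 q y k
  · exact Or.inr (funext hall)
  · push_neg at hall
    left
    set k0 := Nat.find hall with hk0def
    have hk0 : tauPlus g0 g1 q x k0 ≠ tauPlus g0 g1 q y k0 := Nat.find_spec hall
    have hmin : ∀ j < k0, tauPlus g0 g1 q x j = tauPlus g0 g1 q y j :=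
      fun j hj => not_not.mp (Nat.find_min hall hj)
    refine ⟨k0, hmin, ?_⟩
    have hle := H.orbit_le_p hx hy hxy k0 hmin
    cases hbx : tauPlus g0 g1 q x k0 <;> cases hby : tauPlus g0 g1 q y k0
    · exact absurd (hbx.trans hby.symm) hk0
    · decide
    · exfalso
      simp only [tauPlus] at hbx hby
      have h1 : q ≤ (Tplus g0 g1 q)^[k0] x := of_decide_eq_true hbx
      have h2 : ¬ q ≤ (Tplus g0 g1 q)^[k0] y := of_decide_eq_false hby
      exact h2 (le_trans h1 hle)
    · exact absurd (hbx.trans hby.symm) hk0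

lemma orbit_lt_pm {x y : ℝ} (hx : x ∈ Icc (0:ℝ) 1) (hy : y ∈ Icc (0:ℝ) 1) (hxy : x < y) :
    ∀ j, (∀ i < j, tauPlus g0 g1 q x i = tauMinus g0 g1 q y i) →
      (Tplus g0 g1 q)^[j] x < (Tminus g0 g1 q)^[j] y := by
  intro j
  induction j with
  | zero => intro _; simpa using hxy
  | succ j ih =>
    intro hpre
    have hlt := ih (fun i hi => hpre i (Nat.lt_succ_of_lt hi))
    have hsym := hpre j (Nat.lt_succ_self j)
    simp only [tauPlus, tauMinus] at hsym
    have hum := H.Tp_iter_mem hx j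
    have hvm := H.Tm_iter_mem hy j
    set u := (Tplus g0 g1 q)^[j] x with hu
    set v := (Tminus g0 g1 q)^[j] y with hv
    rw [Function.iterate_succ_apply', Function.iterate_succ_apply']
    by_cases hqu : q ≤ u
    · have hdu : decide (q ≤ u) = true := decide_eq_true hqu
      have hdv : decide (q < v) = true := by rw [← hsym]; exact hdu
      have hqv : q < v := of_decide_eq_true hdv
      rw [Tp_ge hqu, Tm_gt hqv]
      exact H.g1_lt (H.mem_dom1 hum hqu) (H.mem_dom1 hvm (le_of_lt hqv)) hlt
    · push_neg at hqu
      have hdu : decide (q ≤ u) = false := decide_eq_false (not_le.mpr hqu)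
      have hdv : decide (q < v) = false := by rw [← hsym]; exact hdu
      have hqv : v ≤ q := not_lt.mp (of_decide_eq_false hdv)
      rw [Tp_lt hqu, Tm_le hqv]
      exact H.g0_lt (H.mem_dom0 hum (le_of_lt hqu)) (H.mem_dom0 hvm hqv) hlt

lemma lex_pm {x y : ℝ} (hx : x ∈ Icc (0:ℝ) 1) (hy : y ∈ Icc (0:ℝ) 1) (hxy : x < y) :
    lexLe (tauPlus g0 g1 q x) (tauMinus g0 g1 q y) := by
  classical
  by_cases hall : ∀ k, tauPlus g0 g1 q x k = tauMinus g0 g1 q y k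
  · exact Or.inr (funext hall)
  · push_neg at hall
    left
    set k0 := Nat.find hall with hk0def
    have hk0 : tauPlus g0 g1 q x k0 ≠ tauMinus g0 g1 q y k0 := Nat.find_spec hall
    have hmin : ∀ j < k0, tauPlus g0 g1 q x j = tauMinus g0 g1 q y j :=
      fun j hj => not_not.mp (Nat.find_min hall hj)
    refine ⟨k0, hmin, ?_⟩
    have hlt := H.orbit_lt_pm hx hy hxy k0 hmin
    cases hbx : tauPlus g0 g1 q x k0 <;> cases hby : tauMinus g0 g1 q y k0
    · exact absurd (hbx.trans hby.symm) hk0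
    · decide
    · exfalso
      simp only [tauPlus, tauMinus] at hbx hby
      have h1 : q ≤ (Tplus g0 g1 q)^[k0] x := of_decide_eq_true hbx
      have h2 : ¬ q < (Tminus g0 g1 q)^[k0] y := of_decide_eq_false hby
      push_neg at h2
      linarith
    · exact absurd (hbx.trans hby.symm) hk0

lemma orbit_exp {x y : ℝ} (hx : x ∈ Icc (0:ℝ) 1) (hy : y ∈ Icc (0:ℝ) 1) (hxy : x ≤ y) :
    ∀ n, (∀ i < n, tauMinus g0 g1 q x i = tauMinus g0 g1 q y i) →
      y - x ≤ c ^ n * ((Tminus g0 g1 q)^[n] y - (Tminus g0 g1 q)^[n] x) := by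
  intro n
  induction n with
  | zero => intro _; simp
  | succ n ih =>
    intro hpre
    have hbnd := ih (fun i hi => hpre i (Nat.lt_succ_of_lt hi))
    have hle := H.orbit_le hx hy hxy n (fun i hi => hpre i (Nat.lt_succ_of_lt hi))
    have hsym := hpre n (Nat.lt_succ_self n)
    simp only [tauMinus] at hsym
    have hum := H.Tm_iter_mem hx n
    have hvm := H.Tm_iter_mem hy n
    set u := (Tminus g0 g1 q)^[n] x with hu
    set v := (Tminus g0 g1 q)^[n] y with hv
    rw [Function.iterate_succ_apply', Function.iterate_succ_apply']
    have hkey : v - u ≤ c * (Tminus g0 g1 q v - Tminus g0 g1 q u) := by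
      by_cases hqu : q < u
      · have hqv : q < v := lt_of_lt_of_le hqu hle
        rw [Tm_gt hqu, Tm_gt hqv]
        exact H.g1_exp (H.mem_dom1 hum (le_of_lt hqu)) (H.mem_dom1 hvm (le_of_lt hqv)) hle
      · push_neg at hqu
        have hdu : decide (q < u) = false := decide_eq_false (not_lt.mpr hqu)
        have hdv : decide (q < v) = false := by rw [← hsym]; exact hdu
        have hqv : v ≤ q := not_lt.mp (of_decide_eq_false hdv)
        rw [Tm_le hqu, Tm_le hqv]
        exact H.g0_exp (H.mem_dom0 hum hqu) (H.mem_dom0 hvm hqv) hle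
    have hcn : (0:ℝ) ≤ c ^ n := pow_nonneg (le_of_lt H.hcpos) n
    calc y - x ≤ c ^ n * (v - u) := hbnd
      _ ≤ c ^ n * (c * (Tminus g0 g1 q v - Tminus g0 g1 q u)) :=
          mul_le_mul_of_nonneg_left hkey hcn
      _ = c ^ (n+1) * (Tminus g0 g1 q v - Tminus g0 g1 q u) := by rw [pow_succ]; ring


end Hyp

def Om (g0 g1 : ℝ → ℝ) (q : ℝ) : Set (ℕ → Bool) :=
  {ω | ∀ n, (ω n = false → lexLe (shiftn n ω) (tauMinus g0 g1 q q)) ∧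
            (ω n = true → lexLe (tauPlus g0 g1 q q) (shiftn n ω))}

lemma shiftn_zero (ω : ℕ → Bool) : shiftn 0 ω = ω := by
  funext k; simp [shiftn]

lemma shiftn_shiftn (m n : ℕ) (ω : ℕ → Bool) : shiftn m (shiftn n ω) = shiftn (m + n) ω := by
  funext k; simp [shiftn, Nat.add_assoc]

lemma Om_shift {g0 g1 : ℝ → ℝ} {q : ℝ} {ω : ℕ → Bool} (hω : ω ∈ Om g0 g1 q) (n : ℕ) :
    shiftn n ω ∈ Om g0 g1 q := by
  intro m
  constructor
  · intro h
    rw [shiftn_shiftn]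
    exact (hω (m + n)).1 h
  · intro h
    rw [shiftn_shiftn]
    exact (hω (m + n)).2 h

namespace Hyp

variable {f0 f1 g0 g1 : ℝ → ℝ} {q c : ℝ} (H : Hyp f0 f1 g0 g1 q c)
include H

lemma tauMinus_mem {x : ℝ} (hx : x ∈ Icc (0:ℝ) 1) : tauMinus g0 g1 q x ∈ Om g0 g1 q := by
  intro n
  constructor
  · intro h
    rw [shift_tauMinus]
    have hxn : (Tminus g0 g1 q)^[n] x ≤ q := not_lt.mp (of_decide_eq_false h)
    exact H.lex_mm (H.Tm_iter_mem hx n) H.hq01 hxn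
  · intro h
    rw [shift_tauMinus]
    have hxn : q < (Tminus g0 g1 q)^[n] x := of_decide_eq_true h
    exact H.lex_pm H.hq01 (H.Tm_iter_mem hx n) hxn

lemma tauPlus_mem_q : tauPlus g0 g1 q q ∈ Om g0 g1 q := by
  intro n
  constructor
  · intro h
    rw [shift_tauPlus]
    have hxn : (Tplus g0 g1 q)^[n] q < q := not_le.mp (of_decide_eq_false h)
    exact H.lex_pm (H.Tp_iter_mem H.hq01 n) H.hq01 hxn
  · intro h
    rw [shift_tauPlus]
    exact H.lex_pp H.hq01 (H.Tp_iter_mem H.hq01 n) (of_decide_eq_true h)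

lemma prefix_ne {x y : ℝ} (hx : x ∈ Icc (0:ℝ) 1) (hy : y ∈ Icc (0:ℝ) 1) (hxy : x ≤ y)
    {n : ℕ} (hgapn : c ^ n < y - x) :
    ∃ j < n, tauMinus g0 g1 q x j ≠ tauMinus g0 g1 q y j := by
  by_contra hcon
  push_neg at hcon
  have hexp := H.orbit_exp hx hy hxy n (fun i hi => hcon i hi)
  have hx' := H.Tm_iter_mem hx n
  have hy' := H.Tm_iter_mem hy n
  have h1 : (Tminus g0 g1 q)^[n] y - (Tminus g0 g1 q)^[n] x ≤ 1 := by
    have := hx'.1; have := hy'.2; linarith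
  have h2 : c ^ n * ((Tminus g0 g1 q)^[n] y - (Tminus g0 g1 q)^[n] x) ≤ c ^ n * 1 :=
    mul_le_mul_of_nonneg_left h1 (pow_nonneg (le_of_lt H.hcpos) n)
  linarith

end Hyp

end Stmt16
set_option maxHeartbeats 2000000 in
/-- For every overlapping IFS there exists `a ∈ (0,1)` with `π_a(α) = π_a(β)`. -/
theorem stmt16
    (f0 f1 g0 g1 : ℝ → ℝ) (q : ℝ)
    (hf0m : StrictMonoOn f0 (Icc 0 1)) (hf1m : StrictMonoOn f1 (Icc 0 1))
    (hf0c : ContinuousOn f0 (Icc 0 1)) (hf1c : ContinuousOn f1 (Icc 0 1))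
    (hf0map : MapsTo f0 (Icc 0 1) (Icc 0 1)) (hf1map : MapsTo f1 (Icc 0 1) (Icc 0 1))
    (hf0lip : ∃ c, 0 ≤ c ∧ c < 1 ∧ ∀ x ∈ Icc (0:ℝ) 1, ∀ y ∈ Icc (0:ℝ) 1, |f0 x - f0 y| ≤ c * |x - y|)
    (hf1lip : ∃ c, 0 ≤ c ∧ c < 1 ∧ ∀ x ∈ Icc (0:ℝ) 1, ∀ y ∈ Icc (0:ℝ) 1, |f1 x - f1 y| ≤ c * |x - y|)
    (hf00 : f0 0 = 0) (hf11 : f1 1 = 1)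
    (hf10pos : 0 < f1 0) (hoverf0f1 : f1 0 < f0 1) (hf01lt : f0 1 < 1)
    (hq : q ∈ Ioo (f1 0) (f0 1))
    (hg0 : ∀ x ∈ Icc (0:ℝ) 1, g0 (f0 x) = x) (hg1 : ∀ x ∈ Icc (0:ℝ) 1, g1 (f1 x) = x) :
    ∃ a : ℝ, 0 < a ∧ a < 1 ∧
      piU a (tauMinus g0 g1 q q) = piU a (tauPlus g0 g1 q q) := by
  classical
  obtain ⟨c0, hc00, hc01, hlip0⟩ := hf0lip
  obtain ⟨c1, hc10, hc11, hlip1⟩ := hf1lip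
  set c : ℝ := max (max c0 c1) (1/2) with hcdef
  have hcmax0 : c0 ≤ c := le_trans (le_max_left _ _) (le_max_left _ _)
  have hcmax1 : c1 ≤ c := le_trans (le_max_right _ _) (le_max_left _ _)
  have hchalf : 1/2 ≤ c := le_max_right _ _
  have hclt1 : c < 1 := max_lt (max_lt hc01 hc11) (by norm_num)
  have H : Stmt16.Hyp f0 f1 g0 g1 q c :=
    { f0m := hf0m, f1m := hf1m, f0c := hf0c, f1c := hf1c,
      lip0 := fun x hx y hy =>
        le_trans (hlip0 x hx y hy) (mul_le_mul_of_nonneg_right hcmax0 (abs_nonneg _)),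
      lip1 := fun x hx y hy =>
        le_trans (hlip1 x hx y hy) (mul_le_mul_of_nonneg_right hcmax1 (abs_nonneg _)),
      hc0 := hchalf, hc1 := hclt1,
      h00 := hf00, h11 := hf11, h10 := hf10pos, h01 := hf01lt,
      hq1 := hq.1, hq2 := hq.2, hg0 := hg0, hg1 := hg1 }
  have hcpos : 0 < c := H.hcpos
  set A := tauMinus g0 g1 q q with hA
  set B := tauPlus g0 g1 q q with hB
  have hA0 : A 0 = false := by
    simp only [hA, tauMinus, Function.iterate_zero_apply]
    simp
  have hB0 : B 0 = true := by
    simp only [hB, tauPlus, Function.iterate_zero_apply]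
    simp
  have hAmem : A ∈ Stmt16.Om g0 g1 q := H.tauMinus_mem H.hq01
  have hBmem : B ∈ Stmt16.Om g0 g1 q := H.tauPlus_mem_q
  set S0 : ℝ → Set ℝ := fun a => piU a '' {ω | ω ∈ Stmt16.Om g0 g1 q ∧ ω 0 = false} with hS0
  set S1 : ℝ → Set ℝ := fun a => piU a '' {ω | ω ∈ Stmt16.Om g0 g1 q ∧ ω 0 = true} with hS1
  set Mf : ℝ → ℝ := fun a => sSup (S0 a) with hMf
  set mu : ℝ → ℝ := fun a => sInf (S1 a) with hmu
  -- basic boundedness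
  have hS0ne : ∀ a : ℝ, (S0 a).Nonempty := fun a => ⟨piU a A, A, ⟨hAmem, hA0⟩, rfl⟩
  have hS1ne : ∀ a : ℝ, (S1 a).Nonempty := fun a => ⟨piU a B, B, ⟨hBmem, hB0⟩, rfl⟩
  have hS0bddA : ∀ a : ℝ, 0 ≤ a → a < 1 → BddAbove (S0 a) := by
    intro a ha ha1
    refine ⟨1, ?_⟩
    rintro y ⟨ω, _, rfl⟩
    exact Stmt16.piU_le_one ha ha1 ω
  have hS1bddB : ∀ a : ℝ, 0 ≤ a → a < 1 → BddBelow (S1 a) := by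
    intro a ha ha1
    refine ⟨0, ?_⟩
    rintro y ⟨ω, _, rfl⟩
    exact Stmt16.piU_nonneg ha ha1 ω
  -- the fundamental gap inequality
  have hgap : ∀ a : ℝ, 0 ≤ a → a < 1 → ∀ ω ω', ω ∈ Stmt16.Om g0 g1 q →
      ω' ∈ Stmt16.Om g0 g1 q → ∀ n, (∀ j < n, ω j = ω' j) → ω n = false → ω' n = true →
      a ^ n * (mu a - Mf a) ≤ piU a ω' - piU a ω := by
    intro a ha ha1 ω ω' hω hω' n hpre h0 h1
    have hdiff := Stmt16.piU_sub_of_prefix ha ha1 hpre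
    have hmem1 : piU a (shiftn n ω') ∈ S1 a := by
      refine ⟨shiftn n ω', ⟨Stmt16.Om_shift hω' n, ?_⟩, rfl⟩
      show ω' (0 + n) = true
      rwa [Nat.zero_add]
    have hmem0 : piU a (shiftn n ω) ∈ S0 a := by
      refine ⟨shiftn n ω, ⟨Stmt16.Om_shift hω n, ?_⟩, rfl⟩
      show ω (0 + n) = false
      rwa [Nat.zero_add]
    have hi1 : mu a ≤ piU a (shiftn n ω') := csInf_le (hS1bddB a ha ha1) hmem1
    have hi2 : piU a (shiftn n ω) ≤ Mf a := le_csSup (hS0bddA a ha ha1) hmem0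
    rw [hdiff]
    have : mu a - Mf a ≤ piU a (shiftn n ω') - piU a (shiftn n ω) := by linarith
    exact mul_le_mul_of_nonneg_left this (pow_nonneg ha n)
  -- endpoints
  set a1 : ℝ := 1/4 with ha1def
  set a2 : ℝ := (1 + c)/2 with ha2def
  have ha2pos : 0 < a2 := by rw [ha2def]; linarith
  have ha2lt1 : a2 < 1 := by rw [ha2def]; linarith
  have hca2 : c < a2 := by rw [ha2def]; linarith
  have ha1a2 : a1 ≤ a2 := by rw [ha1def, ha2def]; linarith
  -- at a1 the gap is positive
  have hDa1 : 0 < mu a1 - Mf a1 := by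
    have h1 : (1 : ℝ) - a1 ≤ mu a1 := by
      apply le_csInf (hS1ne a1)
      rintro y ⟨ω, ⟨_, hω0⟩, rfl⟩
      exact Stmt16.piU_ge_first (by norm_num [ha1def]) (by norm_num [ha1def]) hω0
    have h2 : Mf a1 ≤ a1 := by
      apply csSup_le (hS0ne a1)
      rintro y ⟨ω, ⟨_, hω0⟩, rfl⟩
      exact Stmt16.piU_le_of_first (by norm_num [ha1def]) (by norm_num [ha1def]) hω0
    rw [ha1def] at *
    linarith
  -- at a2 the gap is nonpositive (counting argument)
  have hDa2 : mu a2 - Mf a2 ≤ 0 := by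
    by_contra hpos
    push_neg at hpos
    set Δ : ℝ := mu a2 - Mf a2 with hΔdef
    have hΔ : 0 < Δ := hpos
    have hratio : 1 < a2 / c := (one_lt_div hcpos).mpr hca2
    obtain ⟨n, hn⟩ := pow_unbounded_of_one_lt (2 * (1/Δ + 1)) hratio
    set d : ℝ := 2 * c ^ n with hddef
    have hcn : (0:ℝ) < c ^ n := pow_pos hcpos n
    have hd0 : 0 < d := by rw [hddef]; linarith
    set m : ℕ := ⌊1/d⌋₊ with hmdef
    have hmd : (m : ℝ) * d ≤ 1 := by
      have h := Nat.floor_le (le_of_lt (div_pos one_pos hd0))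
      calc (m:ℝ) * d ≤ (1/d) * d := mul_le_mul_of_nonneg_right h (le_of_lt hd0)
        _ = 1 := by field_simp
    have hptmem : ∀ i : ℕ, i ≤ m → (i : ℝ) * d ∈ Icc (0:ℝ) 1 := by
      intro i hi
      constructor
      · positivity
      · calc (i:ℝ) * d ≤ (m:ℝ) * d := by
              apply mul_le_mul_of_nonneg_right _ (le_of_lt hd0)
              exact_mod_cast hi
          _ ≤ 1 := hmd
    have hstep : ∀ i : ℕ, i < m →
        a2 ^ n * Δ ≤ piU a2 (tauMinus g0 g1 q ((i+1 : ℕ) * d)) -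
          piU a2 (tauMinus g0 g1 q ((i : ℕ) * d)) := by
      intro i hi
      set x : ℝ := (i : ℕ) * d with hxdef
      set y : ℝ := ((i+1 : ℕ)) * d with hydef
      have hxmem : x ∈ Icc (0:ℝ) 1 := hptmem i (le_of_lt hi)
      have hymem : y ∈ Icc (0:ℝ) 1 := hptmem (i+1) hi
      have hyx : y - x = d := by rw [hxdef, hydef]; push_cast; ring
      have hxy : x ≤ y := by linarith [hyx, hd0]
      have hgapn : c ^ n < y - x := by rw [hyx, hddef]; linarith
      obtain ⟨j0, hj0n, hj0ne⟩ := H.prefix_ne hxmem hymem hxy hgapn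
      have hlexle := H.lex_mm hxmem hymem hxy
      rcases hlexle with hlt | heq
      · obtain ⟨k, hpre, hklt⟩ := hlt
        have hkj0 : k < n := by
          by_contra hcon
          push_neg at hcon
          exact hj0ne (hpre j0 (lt_of_lt_of_le hj0n hcon))
        obtain ⟨hkf, hkt⟩ : tauMinus g0 g1 q x k = false ∧ tauMinus g0 g1 q y k = true := by
          rcases Bool.lt_iff.mp hklt with ⟨h1, h2⟩
          exact ⟨h1, h2⟩
        have hg := hgap a2 (le_of_lt ha2pos) ha2lt1 (tauMinus g0 g1 q x) (tauMinus g0 g1 q y)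
          (H.tauMinus_mem hxmem) (H.tauMinus_mem hymem) k hpre hkf hkt
        have hpow : a2 ^ n ≤ a2 ^ k :=
          pow_le_pow_of_le_one (le_of_lt ha2pos) (le_of_lt ha2lt1) (le_of_lt hkj0)
        have : a2 ^ n * Δ ≤ a2 ^ k * Δ := mul_le_mul_of_nonneg_right hpow (le_of_lt hΔ)
        calc a2 ^ n * Δ ≤ a2 ^ k * Δ := this
          _ ≤ _ := hg
      · exfalso
        exact hj0ne (congrFun heq j0)
    -- telescope
    have htel : (m : ℝ) * (a2 ^ n * Δ) ≤ 1 := by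
      have hsum := Finset.sum_range_sub (fun i => piU a2 (tauMinus g0 g1 q ((i : ℕ) * d))) m
      have hlow : (m : ℝ) * (a2 ^ n * Δ) ≤
          ∑ i ∈ Finset.range m, (piU a2 (tauMinus g0 g1 q (((i+1) : ℕ) * d)) -
            piU a2 (tauMinus g0 g1 q ((i : ℕ) * d))) := by
        calc (m : ℝ) * (a2 ^ n * Δ)
            = ∑ _i ∈ Finset.range m, (a2 ^ n * Δ) := by
              rw [Finset.sum_const, Finset.card_range]; ring
          _ ≤ _ := Finset.sum_le_sum (fun i hi => hstep i (Finset.mem_range.mp hi))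
      rw [hsum] at hlow
      have hub : piU a2 (tauMinus g0 g1 q ((m : ℕ) * d)) -
          piU a2 (tauMinus g0 g1 q ((0 : ℕ) * d)) ≤ 1 := by
        have h1 := Stmt16.piU_le_one (le_of_lt ha2pos) ha2lt1 (tauMinus g0 g1 q ((m : ℕ) * d))
        have h2 := Stmt16.piU_nonneg (le_of_lt ha2pos) ha2lt1 (tauMinus g0 g1 q ((0 : ℕ) * d))
        linarith
      linarith
    -- numeric contradiction
    have hm1 : 1/d - 1 < (m : ℝ) := by
      have := Nat.lt_floor_add_one (1/d)
      rw [hmdef]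
      linarith
    have hXpos : (0:ℝ) < a2 ^ n := pow_pos ha2pos n
    have hX1 : a2 ^ n ≤ 1 := pow_le_one₀ (le_of_lt ha2pos) (le_of_lt ha2lt1)
    have hdiv : (a2 / c) ^ n = a2 ^ n / c ^ n := div_pow a2 c n
    rw [hdiv] at hn
    have p1 : (2 * (1/Δ + 1)) * Δ < (a2 ^ n / c ^ n) * Δ :=
      mul_lt_mul_of_pos_right hn hΔ
    have p2 : (2 * (1/Δ + 1)) * Δ = 2 + 2 * Δ := by field_simp
    have p3 : (1/d - 1) * (a2 ^ n * Δ) < (m : ℝ) * (a2 ^ n * Δ) :=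
      mul_lt_mul_of_pos_right hm1 (mul_pos hXpos hΔ)
    have p4 : (1/d - 1) * (a2 ^ n * Δ) = (a2 ^ n / c ^ n) * Δ / 2 - a2 ^ n * Δ := by
      rw [hddef]; field_simp
    have p5 : a2 ^ n * Δ ≤ Δ := by nlinarith
    rw [p2] at p1
    rw [p4] at p3
    nlinarith [p1, p3, p5, htel, hΔ]
  -- Lipschitz continuity of mu - Mf on [a1, a2]
  obtain ⟨L, hL0, hLip⟩ := Stmt16.piU_lipschitz ha2pos ha2lt1
  have hmem01 : ∀ a : ℝ, a ∈ Icc a1 a2 → 0 ≤ a ∧ a ≤ a2 ∧ a < 1 := by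
    intro a ha
    have h1 : 0 ≤ a := le_trans (by norm_num [ha1def]) ha.1
    exact ⟨h1, ha.2, lt_of_le_of_lt ha.2 ha2lt1⟩
  have hmuLip : ∀ a ∈ Icc a1 a2, ∀ b ∈ Icc a1 a2, |mu a - mu b| ≤ L * |a - b| := by
    intro a ha b hb
    obtain ⟨ha0, haa2, ha1'⟩ := hmem01 a ha
    obtain ⟨hb0, hba2, hb1'⟩ := hmem01 b hb
    have key : ∀ s t : ℝ, 0 ≤ s → s ≤ a2 → 0 ≤ t → t ≤ a2 → s < 1 → t < 1 →
        mu t - L * |s - t| ≤ mu s := by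
      intro s t hs0 hsa2 ht0 hta2 hs1 ht1
      apply le_csInf (hS1ne s)
      rintro y ⟨ω, hωmem, rfl⟩
      have h1 : mu t ≤ piU t ω := csInf_le (hS1bddB t ht0 ht1) ⟨ω, hωmem, rfl⟩
      have h2 := hLip ω s t hs0 hsa2 ht0 hta2
      have h3 : piU t ω - piU s ω ≤ L * |s - t| := by
        have := abs_le.mp h2
        linarith [this.1]
      linarith
    have k1 := key a b ha0 haa2 hb0 hba2 ha1' hb1'
    have k2 := key b a hb0 hba2 ha0 haa2 hb1' ha1'
    rw [abs_sub_comm b a] at k2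
    rw [abs_le]
    constructor <;> [linarith; linarith]
  have hMfLip : ∀ a ∈ Icc a1 a2, ∀ b ∈ Icc a1 a2, |Mf a - Mf b| ≤ L * |a - b| := by
    intro a ha b hb
    obtain ⟨ha0, haa2, ha1'⟩ := hmem01 a ha
    obtain ⟨hb0, hba2, hb1'⟩ := hmem01 b hb
    have key : ∀ s t : ℝ, 0 ≤ s → s ≤ a2 → 0 ≤ t → t ≤ a2 → s < 1 → t < 1 →
        Mf s ≤ Mf t + L * |s - t| := by
      intro s t hs0 hsa2 ht0 hta2 hs1 ht1
      apply csSup_le (hS0ne s)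
      rintro y ⟨ω, hωmem, rfl⟩
      have h1 : piU t ω ≤ Mf t := le_csSup (hS0bddA t ht0 ht1) ⟨ω, hωmem, rfl⟩
      have h2 := hLip ω s t hs0 hsa2 ht0 hta2
      have h3 : piU s ω - piU t ω ≤ L * |s - t| := by
        have := abs_le.mp h2
        linarith [this.2]
      linarith
    have k1 := key a b ha0 haa2 hb0 hba2 ha1' hb1'
    have k2 := key b a hb0 hba2 ha0 haa2 hb1' ha1'
    rw [abs_sub_comm b a] at k2
    rw [abs_le]
    constructor <;> [linarith; linarith]
  have hDcont : ContinuousOn (fun a => mu a - Mf a) (Icc a1 a2) := by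
    have hlip : LipschitzOnWith (Real.toNNReal (2 * L)) (fun a => mu a - Mf a) (Icc a1 a2) := by
      apply LipschitzOnWith.of_dist_le_mul
      intro a ha b hb
      rw [Real.dist_eq, Real.dist_eq]
      have h1 := hmuLip a ha b hb
      have h2 := hMfLip a ha b hb
      have hcoe : (Real.toNNReal (2 * L) : ℝ) = 2 * L := Real.coe_toNNReal _ (by linarith)
      rw [hcoe]
      calc |mu a - Mf a - (mu b - Mf b)| = |(mu a - mu b) - (Mf a - Mf b)| := by ring_nf
        _ ≤ |mu a - mu b| + |Mf a - Mf b| := abs_sub _ _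
        _ ≤ L * |a - b| + L * |a - b| := add_le_add h1 h2
        _ = 2 * L * |a - b| := by ring
    exact hlip.continuousOn
  -- IVT
  have h0mem : (0:ℝ) ∈ Icc (mu a2 - Mf a2) (mu a1 - Mf a1) := ⟨hDa2, le_of_lt hDa1⟩
  obtain ⟨a, hamem, haeq⟩ := intermediate_value_Icc' ha1a2 hDcont h0mem
  have ha0 : 0 < a := lt_of_lt_of_le (by norm_num [ha1def]) hamem.1
  have ha1' : a < 1 := lt_of_le_of_lt hamem.2 ha2lt1
  refine ⟨a, ha0, ha1', ?_⟩
  have haeq' : mu a = Mf a := by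
    have : mu a - Mf a = 0 := haeq
    linarith
  -- value order from lex order at the critical parameter
  have hgap0 : ∀ ω ω', ω ∈ Stmt16.Om g0 g1 q → ω' ∈ Stmt16.Om g0 g1 q →
      lexLt ω ω' → piU a ω ≤ piU a ω' := by
    intro ω ω' hω hω' hlt
    obtain ⟨k, hpre, hklt⟩ := hlt
    obtain ⟨hkf, hkt⟩ := Bool.lt_iff.mp hklt
    have := hgap a (le_of_lt ha0) ha1' ω ω' hω hω' k hpre hkf hkt
    rw [haeq'] at this
    simp at this
    linarith
  -- extremality of A and B
  have hMA : Mf a = piU a A := by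
    apply le_antisymm
    · apply csSup_le (hS0ne a)
      rintro y ⟨ω, ⟨hωmem, hω0⟩, rfl⟩
      have hlex : lexLe ω A := by
        have := (hωmem 0).1 hω0
        rwa [Stmt16.shiftn_zero] at this
      rcases hlex with hlt | heq
      · exact hgap0 ω A hωmem hAmem hlt
      · rw [heq]
    · exact le_csSup (hS0bddA a (le_of_lt ha0) ha1') ⟨A, ⟨hAmem, hA0⟩, rfl⟩
  have hmB : mu a = piU a B := by
    apply le_antisymm
    · exact csInf_le (hS1bddB a (le_of_lt ha0) ha1') ⟨B, ⟨hBmem, hB0⟩, rfl⟩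
    · apply le_csInf (hS1ne a)
      rintro y ⟨ω, ⟨hωmem, hω0⟩, rfl⟩
      have hlex : lexLe B ω := by
        have := (hωmem 0).2 hω0
        rwa [Stmt16.shiftn_zero] at this
      rcases hlex with hlt | heq
      · exact hgap0 B ω hBmem hωmem hlt
      · rw [heq]
  rw [show piU a (tauMinus g0 g1 q q) = piU a A from rfl,
     show piU a (tauPlus g0 g1 q q) = piU a B from rfl]
  rw [← hMA, ← hmB, haeq']
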